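/- Let (Y_1,X_1),…,(Y_n,X_n) be i.i.d. with law P on {0,1}×ℝ^p, let g be a classifier and α ∈ (0,1) a trimming level. Then E[R_{n,α}(g)] − R_α(g) ≤ √(R(g)) / (√(2n) (1−α)). -/

import Mathlib

open MeasureTheory ProbabilityTheory
open scoped ENNReal

noncomputable section

/-- The classification error `R(g) = P({(y,x) : g(x) ≠ y})`. -/
def classErr {p : ℕ} (P : Measure (Bool × (Fin p → ℝ))) (g : (Fin p → ℝ) → Bool) : ℝ :=
  (P {z | g z.2 ≠ z.1}).toReal

/-- The set of `α`-trimmed versions of a measure `μ`. -/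
def trimmedSet {Ω : Type*} [MeasurableSpace Ω] (μ : Measure Ω) (α : ℝ) :
    Set (Measure Ω) :=
  {ν | IsProbabilityMeasure ν ∧ ν ≪ μ ∧
    ∀ᵐ z ∂μ, ν.rnDeriv μ z ≤ ENNReal.ofReal (1 / (1 - α))}

/-- The trimmed classification error `R_α(g) = inf_{Q ∈ 𝓡_α(P)} Q(g(x) ≠ y)`. -/
def trimmedErr {p : ℕ} (P : Measure (Bool × (Fin p → ℝ))) (α : ℝ)
    (g : (Fin p → ℝ) → Bool) : ℝ :=
  sInf ((fun Q => (Q {z | g z.2 ≠ z.1}).toReal) '' trimmedSet P α)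

/-- Empirical classification error `R_n(g) = (1/n) Σ_i 1{g(X_i) ≠ Y_i}`. -/
def empErr {p : ℕ} (n : ℕ) (ξ : Fin n → Bool × (Fin p → ℝ))
    (g : (Fin p → ℝ) → Bool) : ℝ :=
  (1 / n) * ∑ i, if g (ξ i).2 ≠ (ξ i).1 then (1 : ℝ) else 0

lemma integral_abs_le_sqrt_integral_sq {Ω : Type*} [MeasurableSpace Ω] (μ : Measure Ω)
    [IsProbabilityMeasure μ] {Z : Ω → ℝ} (hZ : MemLp Z 2 μ) :
    ∫ ω, |Z ω| ∂μ ≤ Real.sqrt (∫ ω, (Z ω)^2 ∂μ) := by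
  have hconj : Real.HolderConjugate 2 2 := Real.HolderConjugate.two_two
  have h := integral_mul_le_Lp_mul_Lq_of_nonneg (μ := μ) hconj
    (f := fun ω => |Z ω|) (g := fun _ => (1:ℝ))
    (Filter.Eventually.of_forall fun ω => abs_nonneg _)
    (Filter.Eventually.of_forall fun ω => zero_le_one)
    (by rw [show ENNReal.ofReal 2 = 2 by norm_num]; exact hZ.abs) (by simpa using (memLp_const (1:ℝ)))
  simp only [mul_one, Real.one_rpow, integral_const, measure_univ, ENNReal.toReal_one,
    smul_eq_mul, one_mul, probReal_univ] at h
  have h2 : ∀ ω, |Z ω| ^ (2:ℝ) = (Z ω)^2 := fun ω => by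
    rw [Real.rpow_two, sq_abs]
  simp only [h2] at h
  calc ∫ ω, |Z ω| ∂μ ≤ (∫ ω, (Z ω)^2 ∂μ) ^ ((1:ℝ)/2) := h
    _ = Real.sqrt (∫ ω, (Z ω)^2 ∂μ) := by rw [Real.sqrt_eq_rpow]

lemma trimmedErr_lb {p : ℕ} (P : Measure (Bool × (Fin p → ℝ))) [IsProbabilityMeasure P]
    {α : ℝ} (hα : α ∈ Set.Ioo (0:ℝ) 1) {g : (Fin p → ℝ) → Bool} (hg : Measurable g) :
    max ((classErr P g - α) / (1 - α)) 0 ≤ trimmedErr P α g := by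
  have hα1 : (0:ℝ) < 1 - α := by linarith [hα.2]
  have hPmem : P ∈ trimmedSet P α := by
    refine ⟨inferInstance, Measure.AbsolutelyContinuous.rfl, ?_⟩
    filter_upwards [Measure.rnDeriv_self P] with z hz
    rw [hz]
    have h1 : (1:ℝ) ≤ 1 / (1 - α) := by
      rw [le_div_iff₀ hα1]; linarith [hα.1]
    calc (1:ℝ≥0∞) = ENNReal.ofReal 1 := by simp
      _ ≤ ENNReal.ofReal (1 / (1 - α)) := ENNReal.ofReal_le_ofReal h1
  apply le_csInf ⟨_, Set.mem_image_of_mem _ hPmem⟩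
  rintro b ⟨Q, ⟨hQprob, hQac, hQbd⟩, rfl⟩
  set A := {z : Bool × (Fin p → ℝ) | g z.2 ≠ z.1} with hA
  have hAm : MeasurableSet A := by
    have : {z : Bool × (Fin p → ℝ) | g z.2 ≠ z.1} = {z : Bool × (Fin p → ℝ) | g z.2 = z.1}ᶜ := by
      ext z; simp
    rw [hA, this]
    exact (measurableSet_eq_fun (hg.comp measurable_snd) measurable_fst).compl
  have : IsProbabilityMeasure Q := hQprob
  have := Measure.haveLebesgueDecomposition_of_sigmaFinite Q P
  -- Q Aᶜ ≤ ofReal (1/(1-α)) * P Aᶜ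
  have hQc : Q Aᶜ ≤ ENNReal.ofReal (1 / (1 - α)) * P Aᶜ := by
    rw [← Measure.setLIntegral_rnDeriv hQac Aᶜ]
    calc ∫⁻ z in Aᶜ, Q.rnDeriv P z ∂P ≤ ∫⁻ _ in Aᶜ, ENNReal.ofReal (1 / (1 - α)) ∂P :=
          lintegral_mono_ae (ae_restrict_of_ae hQbd)
      _ = ENNReal.ofReal (1 / (1 - α)) * P Aᶜ := by
          rw [setLIntegral_const]
  have hQcR : (Q Aᶜ).toReal ≤ (1 / (1 - α)) * (P Aᶜ).toReal := by
    have hfin : (ENNReal.ofReal (1 / (1 - α)) * P Aᶜ) ≠ ⊤ :=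
      ENNReal.mul_ne_top ENNReal.ofReal_ne_top (measure_ne_top _ _)
    calc (Q Aᶜ).toReal ≤ (ENNReal.ofReal (1 / (1 - α)) * P Aᶜ).toReal :=
          ENNReal.toReal_mono hfin hQc
      _ = (1 / (1 - α)) * (P Aᶜ).toReal := by
          rw [ENNReal.toReal_mul, ENNReal.toReal_ofReal (by positivity)]
  have hQA : (Q A).toReal = 1 - (Q Aᶜ).toReal := by
    have := measure_add_measure_compl (μ := Q) hAm
    have h1 : (Q A).toReal + (Q Aᶜ).toReal = 1 := by
      rw [← ENNReal.toReal_add (measure_ne_top _ _) (measure_ne_top _ _), this]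
      simp
    linarith
  have hPA : (P Aᶜ).toReal = 1 - classErr P g := by
    have := measure_add_measure_compl (μ := P) hAm
    have h1 : (P A).toReal + (P Aᶜ).toReal = 1 := by
      rw [← ENNReal.toReal_add (measure_ne_top _ _) (measure_ne_top _ _), this]
      simp
    simp only [classErr]
    linarith
  rw [hPA] at hQcR
  rw [max_le_iff]
  refine ⟨?_, ENNReal.toReal_nonneg⟩
  show (classErr P g - α) / (1 - α) ≤ (Q A).toReal
  rw [hQA, div_le_iff₀ hα1]
  have hmul : (Q Aᶜ).toReal * (1 - α) ≤ 1 - classErr P g := by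
    have := mul_le_mul_of_nonneg_right hQcR (le_of_lt hα1)
    calc (Q Aᶜ).toReal * (1-α) ≤ 1 / (1 - α) * (1 - classErr P g) * (1-α) := this
      _ = 1 - classErr P g := by field_simp
  nlinarith


/-- Proposition 3 (upper bound): for an i.i.d. sample with law `P`,
`E[R_{n,α}(g)] − R_α(g) ≤ √(R(g)) / (√(2n) (1−α))`, where
`R_{n,α}(g) = (R_n(g) − α)_+/(1−α)`. -/
theorem expectation_sub_trimmedErr_le {p : ℕ}
    (P : Measure (Bool × (Fin p → ℝ))) [IsProbabilityMeasure P]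
    {α : ℝ} (hα : α ∈ Set.Ioo (0 : ℝ) 1)
    {g : (Fin p → ℝ) → Bool} (hg : Measurable g)
    {Ω : Type*} [MeasurableSpace Ω] (μ : Measure Ω) [IsProbabilityMeasure μ]
    {n : ℕ} (hn : 0 < n) (ξ : Fin n → Ω → Bool × (Fin p → ℝ))
    (hmeas : ∀ i, Measurable (ξ i))
    (hindep : iIndepFun ξ μ)
    (hlaw : ∀ i, μ.map (ξ i) = P) :
    (∫ ω, max (empErr n (fun i => ξ i ω) g - α) 0 / (1 - α) ∂μ) - trimmedErr P α g ≤
      Real.sqrt (classErr P g) / (Real.sqrt (2 * n) * (1 - α)) := by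

  have hα1 : (0:ℝ) < 1 - α := by linarith [hα.2]
  have hnR : (0:ℝ) < n := Nat.cast_pos.mpr hn
  set A := {z : Bool × (Fin p → ℝ) | g z.2 ≠ z.1} with hAdef
  have hAm : MeasurableSet A := by
    have : A = {z : Bool × (Fin p → ℝ) | g z.2 = z.1}ᶜ := by ext z; simp [hAdef]
    rw [this]
    exact (measurableSet_eq_fun (hg.comp measurable_snd) measurable_fst).compl
  set R := (P A).toReal with hRdef
  have hR0 : 0 ≤ R := ENNReal.toReal_nonneg
  have hR1 : R ≤ 1 := by
    rw [hRdef]; exact ENNReal.toReal_le_of_le_ofReal zero_le_one (by simpa using prob_le_one)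
  set h : Bool × (Fin p → ℝ) → ℝ := fun z => if g z.2 ≠ z.1 then 1 else 0 with hhdef
  have hh : Measurable h := Measurable.ite hAm measurable_const measurable_const
  set f : Fin n → Ω → ℝ := fun i ω => h (ξ i ω) with hfdef
  have hfm : ∀ i, Measurable (f i) := fun i => hh.comp (hmeas i)
  have hfvals : ∀ i ω, f i ω = 0 ∨ f i ω = 1 := by
    intro i ω
    by_cases hc : g (ξ i ω).2 ≠ (ξ i ω).1 <;> simp [hfdef, hhdef, hc]
  have hfL2 : ∀ i, MemLp (f i) 2 μ := by
    intro i
    refine MemLp.of_bound (hfm i).aestronglyMeasurable 1 (Filter.Eventually.of_forall fun ω => ?_)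
    rcases hfvals i ω with h0 | h0 <;> rw [h0] <;> simp
  have hfint : ∀ i, Integrable (f i) μ := fun i => (hfL2 i).integrable one_le_two
  have hEh : ∫ z, h z ∂P = R := by
    have hind : h = A.indicator (fun _ => (1:ℝ)) := by
      funext z
      by_cases hc : g z.2 ≠ z.1 <;> simp [hhdef, Set.indicator, hAdef, hc]
    rw [hind, hRdef]
    exact integral_indicator_one hAm
  have hEf : ∀ i, ∫ ω, f i ω ∂μ = R := by
    intro i
    calc ∫ ω, f i ω ∂μ = ∫ z, h z ∂(μ.map (ξ i)) :=
          (integral_map (hmeas i).aemeasurable hh.aestronglyMeasurable).symm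
      _ = R := by rw [hlaw i, hEh]
  have hsqf : ∀ i ω, (f i ω) ^ 2 = f i ω := by
    intro i ω; rcases hfvals i ω with h0 | h0 <;> rw [h0] <;> norm_num
  have hvarf : ∀ i, variance (f i) μ = R - R ^ 2 := by
    intro i
    rw [variance_eq_sub (hfL2 i)]
    have : (μ[(f i) ^ 2] : ℝ) = R := by
      have : ((f i) ^ 2 : Ω → ℝ) = f i := by funext ω; exact hsqf i ω
      rw [this, hEf i]
    rw [this, hEf i]
  set S : Ω → ℝ := ∑ i, f i with hSdef
  have hSapp : ∀ ω, S ω = ∑ i, f i ω := by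
    intro ω; rw [hSdef]; simp
  have hSL2 : MemLp S 2 μ := memLp_finset_sum' _ (fun i _ => hfL2 i)
  have hindepf : iIndepFun f μ :=
    hindep.comp (fun _ => h) (fun _ => hh)
  have hvarS : variance S μ = n * (R - R ^ 2) := by
    rw [hSdef, IndepFun.variance_sum (fun i _ => hfL2 i)
      (fun i _ j _ hij => hindepf.indepFun hij)]
    simp [hvarf]; ring
  have hES : ∫ ω, S ω ∂μ = n * R := by
    calc ∫ ω, S ω ∂μ = ∫ ω, ∑ i, f i ω ∂μ := by simp_rw [hSapp]
      _ = ∑ i, ∫ ω, f i ω ∂μ := integral_finset_sum _ (fun i _ => hfint i)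
      _ = n * R := by simp [hEf, Finset.card_univ]
  set X : Ω → ℝ := fun ω => (1 / (n:ℝ)) * S ω with hXdef
  have hXL2 : MemLp X 2 μ := hSL2.const_mul _
  have hXint : Integrable X μ := hXL2.integrable one_le_two
  have hEX : ∫ ω, X ω ∂μ = R := by
    rw [hXdef]
    rw [integral_const_mul, hES]
    field_simp
  have hvarX : variance X μ = (R - R ^ 2) / n := by
    have : X = (1 / (n:ℝ)) • S := by funext ω; simp [hXdef]
    rw [this, variance_smul, hvarS]
    field_simp
  set Z : Ω → ℝ := fun ω => X ω - R with hZdef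
  have hZL2 : MemLp Z 2 μ := hXL2.sub (memLp_const R)
  have hZint : Integrable Z μ := hZL2.integrable one_le_two
  have hEZ : ∫ ω, Z ω ∂μ = 0 := by
    rw [hZdef]
    rw [integral_sub hXint (integrable_const R), hEX, integral_const]
    simp
  have hEZsq : ∫ ω, (Z ω) ^ 2 ∂μ = (R - R ^ 2) / n := by
    have hveq := variance_eq_integral hXL2.aestronglyMeasurable.aemeasurable
    rw [hEX] at hveq
    calc ∫ ω, (Z ω) ^ 2 ∂μ = ∫ x, (((X - fun _ => R) ^ 2 : Ω → ℝ)) x ∂μ := rfl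
      _ = variance X μ := hveq.symm
      _ = (R - R ^ 2) / n := hvarX
  have habsZ : ∫ ω, |Z ω| ∂μ ≤ Real.sqrt (R / n) := by
    calc ∫ ω, |Z ω| ∂μ ≤ Real.sqrt (∫ ω, (Z ω) ^ 2 ∂μ) :=
          integral_abs_le_sqrt_integral_sq μ hZL2
      _ = Real.sqrt ((R - R ^ 2) / n) := by rw [hEZsq]
      _ ≤ Real.sqrt (R / n) := by
          apply Real.sqrt_le_sqrt
          apply div_le_div_of_nonneg_right ?_ hnR.le
          nlinarith
  -- integral of positive part of Z
  have hZposint : Integrable (fun ω => max (Z ω) 0) μ := hZint.pos_part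
  have hEZpos : ∫ ω, max (Z ω) 0 ∂μ ≤ Real.sqrt (R / n) / 2 := by
    have hmaxeq : ∀ ω, max (Z ω) 0 = (Z ω + |Z ω|) / 2 := by
      intro ω; rcases le_or_gt 0 (Z ω) with hc | hc
      · rw [max_eq_left hc, abs_of_nonneg hc]; ring
      · rw [max_eq_right hc.le, abs_of_neg hc]; ring
    calc ∫ ω, max (Z ω) 0 ∂μ = ∫ ω, (Z ω + |Z ω|) / 2 ∂μ := by simp_rw [hmaxeq]
      _ = ((∫ ω, Z ω ∂μ) + ∫ ω, |Z ω| ∂μ) / 2 := by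
          rw [integral_div, integral_add hZint hZint.abs]
      _ = (∫ ω, |Z ω| ∂μ) / 2 := by rw [hEZ]; ring
      _ ≤ Real.sqrt (R / n) / 2 := by linarith
  -- empirical error equals X
  have hemp : ∀ ω, empErr n (fun i => ξ i ω) g = X ω := by
    intro ω
    show (1/(n:ℝ)) * ∑ i, (if g (ξ i ω).2 ≠ (ξ i ω).1 then (1:ℝ) else 0) = (1/(n:ℝ)) * S ω
    rw [hSapp]
  have hXm : Integrable (fun ω => max (X ω - α) 0) μ :=
    (hXint.sub (integrable_const α)).pos_part
  have hkey : ∫ ω, max (X ω - α) 0 ∂μ ≤ max (R - α) 0 + Real.sqrt (R / n) / 2 := by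
    calc ∫ ω, max (X ω - α) 0 ∂μ ≤ ∫ ω, (max (R - α) 0 + max (Z ω) 0) ∂μ := by
          apply integral_mono hXm ((integrable_const _).add hZposint)
          intro ω
          show max (X ω - α) 0 ≤ max (R - α) 0 + max (Z ω) 0
          have : X ω - α = (R - α) + Z ω := by rw [hZdef]; ring
          rw [this]
          simpa using max_add_add_le_max_add_max (a := R - α) (b := Z ω) (c := (0:ℝ)) (d := (0:ℝ))
      _ = max (R - α) 0 + ∫ ω, max (Z ω) 0 ∂μ := by
          rw [integral_add (integrable_const _) hZposint, integral_const]; simp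
      _ ≤ max (R - α) 0 + Real.sqrt (R / n) / 2 := by linarith
  -- conclusion
  have hclass : classErr P g = R := rfl
  have hLHS : (∫ ω, max (empErr n (fun i => ξ i ω) g - α) 0 / (1 - α) ∂μ)
      = (∫ ω, max (X ω - α) 0 ∂μ) / (1 - α) := by
    rw [integral_div]
    congr 1
    apply integral_congr_ae
    filter_upwards with ω
    rw [hemp ω]
  have htrim : max (R - α) 0 / (1 - α) ≤ trimmedErr P α g := by
    have := trimmedErr_lb P hα hg
    rw [hclass] at this
    calc max (R - α) 0 / (1 - α) = max ((R - α) / (1 - α)) (0 / (1 - α)) :=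
          (max_div_div_right hα1.le _ _).symm
      _ = max ((R - α) / (1 - α)) 0 := by rw [zero_div]
      _ ≤ trimmedErr P α g := this
  rw [hLHS, hclass]
  have hsqrt2 : Real.sqrt 2 ≤ 2 := by
    nlinarith [Real.sq_sqrt (by norm_num : (0:ℝ) ≤ 2), Real.sqrt_nonneg 2]
  have hsn : 0 < Real.sqrt n := Real.sqrt_pos.mpr hnR
  have hs2 : 0 < Real.sqrt 2 := Real.sqrt_pos.mpr two_pos
  calc (∫ ω, max (X ω - α) 0 ∂μ) / (1 - α) - trimmedErr P α g
      ≤ (max (R - α) 0 + Real.sqrt (R / n) / 2) / (1 - α) - max (R - α) 0 / (1 - α) :=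
        sub_le_sub (div_le_div_of_nonneg_right hkey hα1.le) htrim
    _ = Real.sqrt (R / n) / (2 * (1 - α)) := by field_simp; ring
    _ = Real.sqrt R / (2 * Real.sqrt n * (1 - α)) := by
        rw [Real.sqrt_div hR0, div_div]
        congr 1
        ring
    _ ≤ Real.sqrt R / (Real.sqrt (2 * n) * (1 - α)) := by
        rw [Real.sqrt_mul (by norm_num : (0:ℝ) ≤ 2)]
        apply div_le_div_of_nonneg_left (Real.sqrt_nonneg R)
        · exact mul_pos (mul_pos hs2 hsn) hα1
        · have : Real.sqrt 2 * Real.sqrt n * (1 - α) ≤ 2 * Real.sqrt n * (1 - α) := by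
            apply mul_le_mul_of_nonneg_right _ hα1.le
            exact mul_le_mul_of_nonneg_right hsqrt2 hsn.le
          exact this


end
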